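/- Let d ≥ 1 be a real number and δ > 0, and let x and y be vectors in ℝ^n satisfying d ≤ ‖x‖ ≤ 2d, d ≤ ‖y‖ ≤ 2d, and ‖x − y‖ ≤ 2δ. Then sin(angle(x, y)) ≤ 4δ/d, where angle(x, y) ∈ [0, π] is the angle between x and y. -/

import Mathlib

open InnerProductGeometry

/-- Two vectors of length between `d` and `2d` whose difference has norm at most `2δ`
make an angle whose sine is at most `4δ/d`. -/
theorem sin_angle_of_close_long_vectors (n : ℕ) (d δ : ℝ) (hd : 1 ≤ d) (hδ : 0 < δ)
    (x y : EuclideanSpace ℝ (Fin n))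
    (hx₁ : d ≤ ‖x‖) (hx₂ : ‖x‖ ≤ 2 * d) (hy₁ : d ≤ ‖y‖) (hy₂ : ‖y‖ ≤ 2 * d)
    (hxy : ‖x - y‖ ≤ 2 * δ) :
    Real.sin (InnerProductGeometry.angle x y) ≤ 4 * δ / d := by
  have hd0 : (0:ℝ) < d := lt_of_lt_of_le one_pos hd
  have hx0 : (0:ℝ) < ‖x‖ := lt_of_lt_of_le hd0 hx₁
  have hy0 : (0:ℝ) < ‖y‖ := lt_of_lt_of_le hd0 hy₁
  have hxne : x ≠ 0 := by simpa using hx0.ne'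
  have hyne : y ≠ 0 := by simpa using hy0.ne'
  set u : EuclideanSpace ℝ (Fin n) := ‖x‖⁻¹ • x with hu
  set v : EuclideanSpace ℝ (Fin n) := ‖y‖⁻¹ • y with hv
  have hnu : ‖u‖ = 1 := norm_smul_inv_norm hxne
  have hnv : ‖v‖ = 1 := norm_smul_inv_norm hyne
  have hang : angle u v = angle x y := by
    rw [hu, hv, angle_smul_left_of_pos _ _ (inv_pos.2 hx0),
      angle_smul_right_of_pos _ _ (inv_pos.2 hy0)]
  -- inner product of unit vectors equals cos of angle
  have hinner : (inner ℝ u v : ℝ) = Real.cos (angle x y) := by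
    have := cos_angle_mul_norm_mul_norm u v
    rw [hnu, hnv, hang] at this
    simpa using this.symm
  have hsq : ‖u - v‖ ^ 2 = 2 - 2 * Real.cos (angle x y) := by
    rw [← real_inner_self_eq_norm_sq]
    rw [inner_sub_sub_self]
    have hinner' : (inner ℝ v u : ℝ) = Real.cos (angle x y) := by
      rw [real_inner_comm]; exact hinner
    rw [real_inner_self_eq_norm_sq, real_inner_self_eq_norm_sq, hnu, hnv, hinner', hinner]
    ring
  -- sin θ ≤ ‖u - v‖
  have hsin_nonneg : 0 ≤ Real.sin (angle x y) := Real.sin_nonneg_of_nonneg_of_le_pi (angle_nonneg x y) (angle_le_pi x y)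
  have hsin_sq : Real.sin (angle x y) ^ 2 = 1 - Real.cos (angle x y) ^ 2 := by
    rw [Real.sin_sq]
  have hcos1 : Real.cos (angle x y) ≤ 1 := Real.cos_le_one _
  have h1 : Real.sin (angle x y) ≤ ‖u - v‖ := by
    nlinarith [norm_nonneg (u - v), sq_nonneg (1 - Real.cos (angle x y)),
      sq_nonneg (Real.sin (angle x y) - ‖u - v‖)]
  -- ‖u - v‖ ≤ 2 * ‖x - y‖ / ‖x‖
  have h2 : ‖u - v‖ ≤ 2 * ‖x - y‖ / ‖x‖ := by
    have hdecomp : u - v = ‖x‖⁻¹ • (x - y) + (‖x‖⁻¹ - ‖y‖⁻¹) • y := by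
      rw [hu, hv, smul_sub, sub_smul]
      abel
    have htri : ‖u - v‖ ≤ ‖‖x‖⁻¹ • (x - y)‖ + ‖(‖x‖⁻¹ - ‖y‖⁻¹) • y‖ := by
      rw [hdecomp]; exact norm_add_le _ _
    have hA : ‖‖x‖⁻¹ • (x - y)‖ = ‖x - y‖ / ‖x‖ := by
      rw [norm_smul, Real.norm_eq_abs, abs_of_pos (inv_pos.2 hx0)]
      rw [inv_mul_eq_div]
    have hB : ‖(‖x‖⁻¹ - ‖y‖⁻¹) • y‖ ≤ ‖x - y‖ / ‖x‖ := by
      rw [norm_smul, Real.norm_eq_abs]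
      have : ‖x‖⁻¹ - ‖y‖⁻¹ = (‖y‖ - ‖x‖) / (‖x‖ * ‖y‖) := by
        field_simp
      rw [this, abs_div, abs_of_pos (mul_pos hx0 hy0)]
      have habs : |‖y‖ - ‖x‖| ≤ ‖x - y‖ := by
        rw [abs_sub_comm]
        simpa using abs_norm_sub_norm_le x y
      rw [div_mul_eq_mul_div, div_le_div_iff₀ (mul_pos hx0 hy0) hx0]
      calc |‖y‖ - ‖x‖| * ‖y‖ * ‖x‖ ≤ ‖x - y‖ * ‖y‖ * ‖x‖ := by
            apply mul_le_mul_of_nonneg_right (mul_le_mul_of_nonneg_right habs hy0.le) hx0.le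
        _ = ‖x - y‖ * (‖x‖ * ‖y‖) := by ring
      -- done
    calc ‖u - v‖ ≤ ‖x - y‖ / ‖x‖ + ‖x - y‖ / ‖x‖ := by
          rw [← hA]; exact htri.trans (by linarith [hB, hA.le])
      _ = 2 * ‖x - y‖ / ‖x‖ := by ring
  have h3 : 2 * ‖x - y‖ / ‖x‖ ≤ 4 * δ / d := by
    rw [div_le_div_iff₀ hx0 hd0]
    nlinarith [norm_nonneg (x - y)]
  linarith
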